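/- For every positive integer n, the flip graph of slab tilings of the 6n×6n×8n box has at least 2n²+1 connected components. -/
import Mathlib


/-- A slab: an axis-aligned 2×2×1 block of four cells of ℤ³. -/
def IsSlab (S : Set (ℤ × ℤ × ℤ)) : Prop :=
  (∃ x y z : ℤ, S = {(x, y, z), (x + 1, y, z), (x, y + 1, z), (x + 1, y + 1, z)}) ∨
  (∃ x y z : ℤ, S = {(x, y, z), (x + 1, y, z), (x, y, z + 1), (x + 1, y, z + 1)}) ∨
  (∃ x y z : ℤ, S = {(x, y, z), (x, y + 1, z), (x, y, z + 1), (x, y + 1, z + 1)})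

/-- A slab tiling of a region `R ⊆ ℤ³`: a partition of `R` into slabs. -/
def IsSlabTiling (R : Set (ℤ × ℤ × ℤ)) (t : Set (Set (ℤ × ℤ × ℤ))) : Prop :=
  (∀ S ∈ t, IsSlab S) ∧
  (∀ S ∈ t, ∀ S' ∈ t, S ≠ S' → Disjoint S S') ∧
  ⋃₀ t = R

/-- A 2×2×2 block of eight cells of ℤ³. -/
def IsBlock222 (B : Set (ℤ × ℤ × ℤ)) : Prop :=
  ∃ x y z : ℤ, B = {(x, y, z), (x + 1, y, z), (x, y + 1, z), (x + 1, y + 1, z),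
    (x, y, z + 1), (x + 1, y, z + 1), (x, y + 1, z + 1), (x + 1, y + 1, z + 1)}

/-- Two tilings differ by a flip. -/
def Flip (t t' : Set (Set (ℤ × ℤ × ℤ))) : Prop :=
  ∃ P₁ P₂ P₁' P₂' : Set (ℤ × ℤ × ℤ),
    P₁ ∈ t ∧ P₂ ∈ t ∧ P₁' ∈ t' ∧ P₂' ∈ t' ∧
    t \ {P₁, P₂} = t' \ {P₁', P₂'} ∧
    P₁ ∪ P₂ = P₁' ∪ P₂' ∧ IsBlock222 (P₁ ∪ P₂)

/-- The L×M×N box of cells {0,…,L−1}×{0,…,M−1}×{0,…,N−1}. -/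
def Box (L M N : ℤ) : Set (ℤ × ℤ × ℤ) :=
  {p | 0 ≤ p.1 ∧ p.1 < L ∧ 0 ≤ p.2.1 ∧ p.2.1 < M ∧ 0 ≤ p.2.2 ∧ p.2.2 < N}


abbrev P3 := ℤ × ℤ × ℤ

structure Proto where
  o : ℕ
  px : ℤ
  py : ℤ
  pz : ℤ
deriving DecidableEq

def pcells (s : Proto) : List P3 :=
  if s.o = 0 then [(s.px, s.py, s.pz), (s.px+1, s.py, s.pz), (s.px, s.py+1, s.pz), (s.px+1, s.py+1, s.pz)]
  else if s.o = 1 then [(s.px, s.py, s.pz), (s.px+1, s.py, s.pz), (s.px, s.py, s.pz+1), (s.px+1, s.py, s.pz+1)]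
  else [(s.px, s.py, s.pz), (s.px, s.py+1, s.pz), (s.px, s.py, s.pz+1), (s.px, s.py+1, s.pz+1)]

def pset (g : P3) (s : Proto) : Set P3 := {p | (p.1 - g.1, p.2.1 - g.2.1, p.2.2 - g.2.2) ∈ pcells s}

lemma mem_pset {g : P3} {s : Proto} {p : P3} :
    p ∈ pset g s ↔ (p.1 - g.1, p.2.1 - g.2.1, p.2.2 - g.2.2) ∈ pcells s := Iff.rfl

lemma isSlab_pset (g : P3) (s : Proto) : IsSlab (pset g s) := by
  unfold IsSlab
  by_cases h0 : s.o = 0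
  · exact Or.inl ⟨s.px + g.1, s.py + g.2.1, s.pz + g.2.2, by
      ext ⟨px, py, pz⟩
      simp [pset, pcells, h0, Prod.ext_iff]
      omega⟩
  by_cases h1 : s.o = 1
  · exact Or.inr (Or.inl ⟨s.px + g.1, s.py + g.2.1, s.pz + g.2.2, by
      ext ⟨px, py, pz⟩
      simp [pset, pcells, h0, h1, Prod.ext_iff]
      omega⟩)
  · exact Or.inr (Or.inr ⟨s.px + g.1, s.py + g.2.1, s.pz + g.2.2, by
      ext ⟨px, py, pz⟩
      simp [pset, pcells, h0, h1, Prod.ext_iff]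
      omega⟩)
def LA : List Proto := [⟨2, 0, 1, 1⟩, ⟨2, 0, 3, 1⟩, ⟨2, 1, 2, 1⟩, ⟨2, 4, 2, 1⟩, ⟨2, 5, 1, 1⟩, ⟨2, 5, 3, 1⟩, ⟨1, 0, 0, 1⟩, ⟨1, 0, 5, 1⟩, ⟨1, 1, 1, 1⟩, ⟨1, 1, 4, 1⟩, ⟨1, 2, 0, 1⟩, ⟨1, 2, 2, 0⟩, ⟨1, 2, 2, 2⟩, ⟨1, 2, 3, 1⟩, ⟨1, 2, 5, 0⟩, ⟨1, 2, 5, 2⟩, ⟨1, 3, 1, 1⟩, ⟨1, 3, 4, 1⟩, ⟨1, 4, 0, 0⟩, ⟨1, 4, 0, 2⟩, ⟨1, 4, 5, 0⟩, ⟨1, 4, 5, 2⟩, ⟨0, 0, 0, 0⟩, ⟨0, 0, 0, 3⟩, ⟨0, 0, 2, 0⟩, ⟨0, 0, 2, 3⟩, ⟨0, 0, 4, 0⟩, ⟨0, 0, 4, 3⟩, ⟨0, 2, 0, 0⟩, ⟨0, 2, 0, 3⟩, ⟨0, 2, 3, 0⟩, ⟨0, 2, 3, 3⟩, ⟨0,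 4, 1, 0⟩, ⟨0, 4, 1, 3⟩, ⟨0, 4, 3, 0⟩, ⟨0, 4, 3, 3⟩]
def LA2 : List Proto := [⟨2, 0, 1, 1⟩, ⟨2, 0, 3, 1⟩, ⟨2, 1, 2, 1⟩, ⟨2, 4, 2, 1⟩, ⟨2, 5, 1, 1⟩, ⟨2, 5, 3, 1⟩, ⟨1, 0, 0, 1⟩, ⟨1, 0, 5, 1⟩, ⟨1, 1, 1, 1⟩, ⟨1, 1, 4, 1⟩, ⟨1, 2, 0, 0⟩, ⟨1, 2, 0, 2⟩, ⟨1, 2, 2, 1⟩, ⟨1, 2, 3, 0⟩, ⟨1, 2, 3, 2⟩, ⟨1, 2, 5, 1⟩, ⟨1, 3, 1, 1⟩, ⟨1, 3, 4, 1⟩, ⟨1, 4, 0, 0⟩, ⟨1, 4, 0, 2⟩, ⟨1, 4, 5, 0⟩, ⟨1, 4, 5, 2⟩, ⟨0, 0, 0, 0⟩, ⟨0, 0, 0, 3⟩, ⟨0, 0, 2, 0⟩, ⟨0, 0, 2, 3⟩, ⟨0, 0, 4, 0⟩, ⟨0, 0, 4, 3⟩, ⟨0, 2, 1, 0⟩,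 ⟨0, 2, 1, 3⟩, ⟨0, 2, 4, 0⟩, ⟨0, 2, 4, 3⟩, ⟨0, 4, 1, 0⟩, ⟨0, 4, 1, 3⟩, ⟨0, 4, 3, 0⟩, ⟨0, 4, 3, 3⟩]
def LB : List Proto := [⟨2, 0, 0, 0⟩, ⟨2, 0, 0, 2⟩, ⟨2, 0, 2, 0⟩, ⟨2, 0, 2, 2⟩, ⟨2, 0, 4, 0⟩, ⟨2, 0, 4, 2⟩, ⟨2, 1, 1, 1⟩, ⟨2, 1, 3, 1⟩, ⟨2, 2, 2, 1⟩, ⟨2, 3, 2, 0⟩, ⟨2, 3, 2, 2⟩, ⟨2, 4, 1, 1⟩, ⟨2, 4, 3, 1⟩, ⟨2, 5, 0, 0⟩, ⟨2, 5, 0, 2⟩, ⟨2, 5, 2, 1⟩, ⟨2, 5, 4, 0⟩, ⟨2, 5, 4, 2⟩, ⟨1, 1, 0, 1⟩, ⟨1, 1, 5, 1⟩, ⟨1, 2, 1, 1⟩, ⟨1, 2, 4, 1⟩, ⟨1, 3, 0, 1⟩, ⟨1, 3, 5, 1⟩, ⟨0, 1, 0, 0⟩, ⟨0, 1, 0, 3⟩,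 ⟨0, 1, 2, 0⟩, ⟨0, 1, 2, 3⟩, ⟨0, 1, 4, 0⟩, ⟨0, 1, 4, 3⟩, ⟨0, 3, 0, 0⟩, ⟨0, 3, 0, 3⟩, ⟨0, 3, 4, 0⟩, ⟨0, 3, 4, 3⟩, ⟨0, 4, 2, 0⟩, ⟨0, 4, 2, 3⟩]
def LB2 : List Proto := [⟨2, 0, 0, 0⟩, ⟨2, 0, 0, 2⟩, ⟨2, 0, 2, 0⟩, ⟨2, 0, 2, 2⟩, ⟨2, 0, 4, 0⟩, ⟨2, 0, 4, 2⟩, ⟨2, 1, 1, 1⟩, ⟨2, 1, 3, 1⟩, ⟨2, 2, 2, 1⟩, ⟨2, 3, 2, 0⟩, ⟨2, 3, 2, 2⟩, ⟨2, 4, 1, 1⟩, ⟨2, 4, 3, 1⟩, ⟨2, 5, 0, 0⟩, ⟨2, 5, 0, 2⟩, ⟨2, 5, 2, 1⟩, ⟨2, 5, 4, 0⟩, ⟨2, 5, 4, 2⟩, ⟨1, 1, 0, 0⟩, ⟨1, 1, 0, 2⟩, ⟨1, 1, 5, 0⟩, ⟨1, 1, 5, 2⟩, ⟨1, 2, 1,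 1⟩, ⟨1, 2, 4, 1⟩, ⟨1, 3, 0, 1⟩, ⟨1, 3, 5, 1⟩, ⟨0, 1, 1, 0⟩, ⟨0, 1, 1, 3⟩, ⟨0, 1, 3, 0⟩, ⟨0, 1, 3, 3⟩, ⟨0, 3, 0, 0⟩, ⟨0, 3, 0, 3⟩, ⟨0, 3, 4, 0⟩, ⟨0, 3, 4, 3⟩, ⟨0, 4, 2, 0⟩, ⟨0, 4, 2, 3⟩]
def wA : Proto := ⟨1, 2, 0, 0⟩
def wB : Proto := ⟨1, 1, 0, 0⟩

def LL : List Proto := LA ++ LA2 ++ LB ++ LB2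

-- C0: bounds + orientation sanity
set_option maxRecDepth 10000 in
lemma C0 : ∀ s ∈ LL, s.o < 3 ∧ ∀ p ∈ pcells s,
    0 ≤ p.1 ∧ p.1 < 6 ∧ 0 ≤ p.2.1 ∧ p.2.1 < 6 ∧ 0 ≤ p.2.2 ∧ p.2.2 < 4 := by decide

def spread2 (s t : Proto) : Prop :=
  ∃ p ∈ pcells s, ∃ q ∈ pcells t,
    p.1 + 2 ≤ q.1 ∨ q.1 + 2 ≤ p.1 ∨ p.2.1 + 2 ≤ q.2.1 ∨ q.2.1 + 2 ≤ p.2.1 ∨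
    p.2.2 + 2 ≤ q.2.2 ∨ q.2.2 + 2 ≤ p.2.2

instance (s t : Proto) : Decidable (spread2 s t) := by
  unfold spread2; infer_instance

set_option maxRecDepth 100000 in
set_option maxHeartbeats 4000000 in
-- C1: within each block type: distinct protos are far apart (disjoint and never forming a 2x2x2 block)
lemma C1 : ∀ L ∈ [LA, LA2, LB, LB2], ∀ s ∈ L, ∀ t ∈ L, s ≠ t → spread2 s t := by decide

def pdisj (s t : Proto) : Prop := ∀ p ∈ pcells s, p ∉ pcells t
instance (s t : Proto) : Decidable (pdisj s t) := by unfold pdisj; infer_instance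

set_option maxRecDepth 100000 in
set_option maxHeartbeats 4000000 in
lemma C2 : ∀ L ∈ [LA, LA2, LB, LB2], ∀ s ∈ L, ∀ t ∈ L, s ≠ t → pdisj s t := by decide

set_option maxRecDepth 100000 in
set_option maxHeartbeats 4000000 in
lemma C3 : ∀ L ∈ [LA, LA2, LB, LB2], ∀ x ∈ Finset.range 6, ∀ y ∈ Finset.range 6, ∀ z ∈ Finset.range 4,
    ∃ s ∈ L, ((x:ℤ), (y:ℤ), (z:ℤ)) ∈ pcells s := by decide

def Compat (s t : Proto) : Prop :=
  ¬(s.o = 0 ∧ t.o = 0 ∧ s.pz = 3 ∧ t.pz = 0 ∧ s.px = t.px ∧ s.py = t.py) ∧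
  ¬(s.o = 1 ∧ t.o = 1 ∧ s.py = 5 ∧ t.py = 0 ∧ s.px = t.px ∧ s.pz = t.pz) ∧
  ¬(s.o = 2 ∧ t.o = 2 ∧ s.px = 5 ∧ t.px = 0 ∧ s.py = t.py ∧ s.pz = t.pz)
instance (s t : Proto) : Decidable (Compat s t) := by unfold Compat; infer_instance

set_option maxRecDepth 100000 in
set_option maxHeartbeats 4000000 in
lemma C4 : ∀ s ∈ LA ++ LA2, ∀ t ∈ LB ++ LB2, Compat s t ∧ Compat t s := by decide

set_option maxRecDepth 100000 in
set_option maxHeartbeats 4000000 in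
lemma C5 : wA ∈ LA2 ∧ wB ∈ LB2 ∧ (∀ s ∈ LA, ∃ p ∈ pcells wA, p ∉ pcells s)
    ∧ (∀ s ∈ LB, ∃ p ∈ pcells wB, p ∉ pcells s) := by decide

def posIdx (n a b c : ℕ) : ℕ := a + n * b + n * n * c

def listAt (n i a b c : ℕ) : List Proto :=
  if (a + b + c) % 2 = 0 then (if posIdx n a b c < i then LA2 else LA)
  else (if posIdx n a b c < i then LB2 else LB)

def gpos (a b c : ℕ) : P3 := (6 * (a:ℤ), 6 * (b:ℤ), 4 * (c:ℤ))

def tiling (n i : ℕ) : Set (Set P3) :=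
  {S | ∃ a b c : ℕ, a < n ∧ b < n ∧ c < 2 * n ∧ ∃ s ∈ listAt n i a b c, S = pset (gpos a b c) s}

lemma listAt_cases {n i a b c : ℕ} {s : Proto} (h : s ∈ listAt n i a b c) :
    ((a + b + c) % 2 = 0 ∧ (s ∈ LA ∨ s ∈ LA2)) ∨ ((a + b + c) % 2 = 1 ∧ (s ∈ LB ∨ s ∈ LB2)) := by
  unfold listAt at h
  split_ifs at h <;> simp_all <;> omega

lemma listAt_mem_LL {n i a b c : ℕ} {s : Proto} (h : s ∈ listAt n i a b c) : s ∈ LL := by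
  rcases listAt_cases h with ⟨_, h | h⟩ | ⟨_, h | h⟩ <;> simp [LL] <;> tauto

lemma cell_bounds {n i a b c : ℕ} {s : Proto} (hs : s ∈ listAt n i a b c) {p : P3}
    (hp : p ∈ pset (gpos a b c) s) :
    6*(a:ℤ) ≤ p.1 ∧ p.1 < 6*(a:ℤ) + 6 ∧ 6*(b:ℤ) ≤ p.2.1 ∧ p.2.1 < 6*(b:ℤ) + 6 ∧
    4*(c:ℤ) ≤ p.2.2 ∧ p.2.2 < 4*(c:ℤ) + 4 := by
  have h0 := (C0 s (listAt_mem_LL hs)).2 _ hp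
  simp [gpos] at h0
  omega

lemma pset_disjoint_of_ne {g : P3} {s t : Proto} (h : pdisj s t) :
    Disjoint (pset g s) (pset g t) := by
  rw [Set.disjoint_left]
  intro p hp hq
  exact h _ hp hq

lemma tiling_isSlabTiling (n i : ℕ) :
    IsSlabTiling (Box (6*(n:ℤ)) (6*(n:ℤ)) (8*(n:ℤ))) (tiling n i) := by
  refine ⟨?_, ?_, ?_⟩
  · rintro S ⟨a, b, c, ha, hb, hc, s, hs, rfl⟩
    exact isSlab_pset _ _
  · rintro S ⟨a, b, c, ha, hb, hc, s, hs, rfl⟩ S' ⟨a', b', c', ha', hb', hc', s', hs', rfl⟩ hne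
    by_cases hpos : a = a' ∧ b = b' ∧ c = c'
    · obtain ⟨rfl, rfl, rfl⟩ := hpos
      have hsne : s ≠ s' := by rintro rfl; exact hne rfl
      have hL : ∃ L ∈ [LA, LA2, LB, LB2], s ∈ L ∧ s' ∈ L := by
        unfold listAt at hs hs'
        split_ifs at hs hs' <;> simp_all
      obtain ⟨L, hLmem, hsL, hs'L⟩ := hL
      exact pset_disjoint_of_ne (C2 L hLmem s hsL s' hs'L hsne)
    · rw [Set.disjoint_left]
      intro p hp hq
      have b1 := cell_bounds hs hp
      have b2 := cell_bounds hs' hq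
      omega
  · ext p
    simp only [Set.mem_sUnion]
    constructor
    · rintro ⟨S, ⟨a, b, c, ha, hb, hc, s, hs, rfl⟩, hp⟩
      have := cell_bounds hs hp
      simp only [Box, Set.mem_setOf_eq]
      omega
    · rintro ⟨h1, h2, h3, h4, h5, h6⟩
      obtain ⟨px, py, pz⟩ := p
      simp only at h1 h2 h3 h4 h5 h6
      -- local coordinates
      set a : ℕ := (px / 6).toNat with hadef
      set b : ℕ := (py / 6).toNat with hbdef
      set c : ℕ := (pz / 4).toNat with hcdef
      have ha : a < n := by omega
      have hb : b < n := by omega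
      have hc : c < 2 * n := by omega
      have hx : 0 ≤ px - 6*(a:ℤ) ∧ px - 6*(a:ℤ) < 6 := by omega
      have hy : 0 ≤ py - 6*(b:ℤ) ∧ py - 6*(b:ℤ) < 6 := by omega
      have hz : 0 ≤ pz - 4*(c:ℤ) ∧ pz - 4*(c:ℤ) < 4 := by omega
      have hcov : ∀ L ∈ [LA, LA2, LB, LB2], ∃ s ∈ L, ((px - 6*(a:ℤ), py - 6*(b:ℤ), pz - 4*(c:ℤ)) : P3) ∈ pcells s := by
        intro L hL
        have := C3 L hL (px - 6*(a:ℤ)).toNat (by simp [Finset.mem_range]; omega)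
          (py - 6*(b:ℤ)).toNat (by simp [Finset.mem_range]; omega)
          (pz - 4*(c:ℤ)).toNat (by simp [Finset.mem_range]; omega)
        obtain ⟨s, hsL, hmem⟩ := this
        refine ⟨s, hsL, ?_⟩
        have e1 : (((px - 6*(a:ℤ)).toNat : ℤ)) = px - 6*(a:ℤ) := by omega
        have e2 : (((py - 6*(b:ℤ)).toNat : ℤ)) = py - 6*(b:ℤ) := by omega
        have e3 : (((pz - 4*(c:ℤ)).toNat : ℤ)) = pz - 4*(c:ℤ) := by omega
        rwa [e1, e2, e3] at hmem
      have hcov' : ∃ s ∈ listAt n i a b c, ((px - 6*(a:ℤ), py - 6*(b:ℤ), pz - 4*(c:ℤ)) : P3) ∈ pcells s := by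
        unfold listAt
        split_ifs <;> [exact hcov LA2 (by simp); exact hcov LA (by simp);
          exact hcov LB2 (by simp); exact hcov LB (by simp)]
      obtain ⟨s, hsl, hmem⟩ := hcov'
      refine ⟨pset (gpos a b c) s, ⟨a, b, c, ha, hb, hc, s, hsl, rfl⟩, ?_⟩
      simpa [mem_pset, gpos] using hmem

def Bset (x y z : ℤ) : Set P3 :=
  {(x, y, z), (x + 1, y, z), (x, y + 1, z), (x + 1, y + 1, z),
    (x, y, z + 1), (x + 1, y, z + 1), (x, y + 1, z + 1), (x + 1, y + 1, z + 1)}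

lemma memB {x y z : ℤ} {p : P3} (h : p ∈ Bset x y z) :
    x ≤ p.1 ∧ p.1 ≤ x + 1 ∧ y ≤ p.2.1 ∧ p.2.1 ≤ y + 1 ∧ z ≤ p.2.2 ∧ p.2.2 ≤ z + 1 := by
  obtain ⟨px, py, pz⟩ := p
  simp only [Bset, Set.mem_insert_iff, Set.mem_singleton_iff, Prod.mk.injEq] at h
  dsimp only
  omega

lemma slab_data0 {s : Proto} (hL : s ∈ LL) (ho : s.o = 0) {a b c : ℕ} {x y z : ℤ}
    (hsub : pset (gpos a b c) s ⊆ Bset x y z) :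
    6*(a:ℤ) + s.px = x ∧ 6*(b:ℤ) + s.py = y ∧ (4*(c:ℤ) + s.pz = z ∨ 4*(c:ℤ) + s.pz = z + 1) ∧
    0 ≤ s.px ∧ s.px ≤ 4 ∧ 0 ≤ s.py ∧ s.py ≤ 4 ∧ 0 ≤ s.pz ∧ s.pz ≤ 3 := by
  have hc := (C0 s hL).2
  have m1 : ((s.px + 6*(a:ℤ), s.py + 6*(b:ℤ), s.pz + 4*(c:ℤ)) : P3) ∈ pset (gpos a b c) s := by
    simp [pset, pcells, ho, gpos, Prod.ext_iff]
  have m2 : ((s.px + 1 + 6*(a:ℤ), s.py + 1 + 6*(b:ℤ), s.pz + 4*(c:ℤ)) : P3) ∈ pset (gpos a b c) s := by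
    simp [pset, pcells, ho, gpos, Prod.ext_iff]
  have b1 := memB (hsub m1)
  have b2 := memB (hsub m2)
  have l1 := hc _ (show ((s.px, s.py, s.pz) : P3) ∈ pcells s by simp [pcells, ho])
  have l2 := hc _ (show ((s.px + 1, s.py + 1, s.pz) : P3) ∈ pcells s by simp [pcells, ho])
  simp at b1 b2 l1 l2
  omega

lemma slab_data1 {s : Proto} (hL : s ∈ LL) (ho : s.o = 1) {a b c : ℕ} {x y z : ℤ}
    (hsub : pset (gpos a b c) s ⊆ Bset x y z) :
    6*(a:ℤ) + s.px = x ∧ (6*(b:ℤ) + s.py = y ∨ 6*(b:ℤ) + s.py = y + 1) ∧ 4*(c:ℤ) + s.pz = z ∧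
    0 ≤ s.px ∧ s.px ≤ 4 ∧ 0 ≤ s.py ∧ s.py ≤ 5 ∧ 0 ≤ s.pz ∧ s.pz ≤ 2 := by
  have hc := (C0 s hL).2
  have m1 : ((s.px + 6*(a:ℤ), s.py + 6*(b:ℤ), s.pz + 4*(c:ℤ)) : P3) ∈ pset (gpos a b c) s := by
    simp [pset, pcells, ho, gpos, Prod.ext_iff]
  have m2 : ((s.px + 1 + 6*(a:ℤ), s.py + 6*(b:ℤ), s.pz + 1 + 4*(c:ℤ)) : P3) ∈ pset (gpos a b c) s := by
    simp [pset, pcells, ho, gpos, Prod.ext_iff]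
  have b1 := memB (hsub m1)
  have b2 := memB (hsub m2)
  have l1 := hc _ (show ((s.px, s.py, s.pz) : P3) ∈ pcells s by simp [pcells, ho])
  have l2 := hc _ (show ((s.px + 1, s.py, s.pz + 1) : P3) ∈ pcells s by simp [pcells, ho])
  simp at b1 b2 l1 l2
  omega

lemma slab_data2 {s : Proto} (hL : s ∈ LL) (ho : s.o = 2) {a b c : ℕ} {x y z : ℤ}
    (hsub : pset (gpos a b c) s ⊆ Bset x y z) :
    (6*(a:ℤ) + s.px = x ∨ 6*(a:ℤ) + s.px = x + 1) ∧ 6*(b:ℤ) + s.py = y ∧ 4*(c:ℤ) + s.pz = z ∧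
    0 ≤ s.px ∧ s.px ≤ 5 ∧ 0 ≤ s.py ∧ s.py ≤ 4 ∧ 0 ≤ s.pz ∧ s.pz ≤ 2 := by
  have hc := (C0 s hL).2
  have m1 : ((s.px + 6*(a:ℤ), s.py + 6*(b:ℤ), s.pz + 4*(c:ℤ)) : P3) ∈ pset (gpos a b c) s := by
    simp [pset, pcells, ho, gpos, Prod.ext_iff]
  have m2 : ((s.px + 6*(a:ℤ), s.py + 1 + 6*(b:ℤ), s.pz + 1 + 4*(c:ℤ)) : P3) ∈ pset (gpos a b c) s := by
    simp [pset, pcells, ho, gpos, Prod.ext_iff]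
  have b1 := memB (hsub m1)
  have b2 := memB (hsub m2)
  have l1 := hc _ (show ((s.px, s.py, s.pz) : P3) ∈ pcells s by simp [pcells, ho])
  have l2 := hc _ (show ((s.px, s.py + 1, s.pz + 1) : P3) ∈ pcells s by simp [pcells, ho])
  simp at b1 b2 l1 l2
  omega

lemma interface_contra {n i : ℕ} {a1 b1 c1 a2 b2 c2 : ℕ} {s1 s2 : Proto}
    (h1 : s1 ∈ listAt n i a1 b1 c1) (h2 : s2 ∈ listAt n i a2 b2 c2)
    (hpar : (a1 + b1 + c1) % 2 ≠ (a2 + b2 + c2) % 2)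
    (hcmp : ¬ Compat s1 s2) : False := by
  rcases listAt_cases h1 with ⟨p1, m1⟩ | ⟨p1, m1⟩ <;>
    rcases listAt_cases h2 with ⟨p2, m2⟩ | ⟨p2, m2⟩
  · omega
  · exact hcmp (C4 s1 (by simp [List.mem_append]; tauto) s2 (by simp [List.mem_append]; tauto)).1
  · exact hcmp (C4 s2 (by simp [List.mem_append]; tauto) s1 (by simp [List.mem_append]; tauto)).2
  · omega

set_option maxHeartbeats 1600000 in
lemma cross_region {n i : ℕ} {a1 b1 c1 a2 b2 c2 : ℕ} {s1 s2 : Proto}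
    (h1 : s1 ∈ listAt n i a1 b1 c1) (h2 : s2 ∈ listAt n i a2 b2 c2)
    (hne : ¬(a1 = a2 ∧ b1 = b2 ∧ c1 = c2))
    (hblk : IsBlock222 (pset (gpos a1 b1 c1) s1 ∪ pset (gpos a2 b2 c2) s2)) : False := by
  obtain ⟨x, y, z, hB⟩ := hblk
  have hB' : pset (gpos a1 b1 c1) s1 ∪ pset (gpos a2 b2 c2) s2 = Bset x y z := hB
  have hsub1 : pset (gpos a1 b1 c1) s1 ⊆ Bset x y z := by
    rw [← hB']; exact Set.subset_union_left
  have hsub2 : pset (gpos a2 b2 c2) s2 ⊆ Bset x y z := by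
    rw [← hB']; exact Set.subset_union_right
  have hLL1 := listAt_mem_LL h1
  have hLL2 := listAt_mem_LL h2
  have hcov : ∀ p ∈ Bset x y z, p ∈ pset (gpos a1 b1 c1) s1 ∨ p ∈ pset (gpos a2 b2 c2) s2 := by
    intro p hp; rw [← hB'] at hp; exact hp
  have cvA := hcov (x, y, z) (by simp [Bset])
  have cvB := hcov (x + 1, y + 1, z) (by simp [Bset])
  have cvC := hcov (x + 1, y, z + 1) (by simp [Bset])
  have cvD := hcov (x, y + 1, z + 1) (by simp [Bset])
  have ho1 : s1.o = 0 ∨ s1.o = 1 ∨ s1.o = 2 := by have := (C0 s1 hLL1).1; omega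
  have ho2 : s2.o = 0 ∨ s2.o = 1 ∨ s2.o = 2 := by have := (C0 s2 hLL2).1; omega
  have key : (s1.o = 0 ∧ s2.o = 0 ∧ a1 = a2 ∧ b1 = b2 ∧ c2 = c1 + 1 ∧ s1.pz = 3 ∧ s2.pz = 0 ∧ s1.px = s2.px ∧ s1.py = s2.py) ∨
      (s2.o = 0 ∧ s1.o = 0 ∧ a2 = a1 ∧ b2 = b1 ∧ c1 = c2 + 1 ∧ s2.pz = 3 ∧ s1.pz = 0 ∧ s2.px = s1.px ∧ s2.py = s1.py) ∨
      (s1.o = 1 ∧ s2.o = 1 ∧ a1 = a2 ∧ c1 = c2 ∧ b2 = b1 + 1 ∧ s1.py = 5 ∧ s2.py = 0 ∧ s1.px = s2.px ∧ s1.pz = s2.pz) ∨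
      (s2.o = 1 ∧ s1.o = 1 ∧ a2 = a1 ∧ c2 = c1 ∧ b1 = b2 + 1 ∧ s2.py = 5 ∧ s1.py = 0 ∧ s2.px = s1.px ∧ s2.pz = s1.pz) ∨
      (s1.o = 2 ∧ s2.o = 2 ∧ b1 = b2 ∧ c1 = c2 ∧ a2 = a1 + 1 ∧ s1.px = 5 ∧ s2.px = 0 ∧ s1.py = s2.py ∧ s1.pz = s2.pz) ∨
      (s2.o = 2 ∧ s1.o = 2 ∧ b2 = b1 ∧ c2 = c1 ∧ a1 = a2 + 1 ∧ s2.px = 5 ∧ s1.px = 0 ∧ s2.py = s1.py ∧ s2.pz = s1.pz) := by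
    rcases ho1 with ho1 | ho1 | ho1 <;> rcases ho2 with ho2 | ho2 | ho2
    case inl.inl =>
      have d1 := slab_data0 hLL1 ho1 hsub1
      have d2 := slab_data0 hLL2 ho2 hsub2
      obtain ⟨ex1, ey1, ez1, hb1⟩ := d1
      obtain ⟨ex2, ey2, ez2, hb2⟩ := d2
      simp only [pset, pcells, gpos, ho1, ho2, Set.mem_union, Set.mem_setOf_eq, List.mem_cons,
        List.not_mem_nil, or_false, Prod.mk.injEq, reduceIte] at cvA cvB cvC cvD
      have sub : a1 = a2 ∧ b1 = b2 ∧ ((c2 = c1 + 1 ∧ s1.pz = 3 ∧ s2.pz = 0 ∧ s1.px = s2.px ∧ s1.py = s2.py) ∨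
          (c1 = c2 + 1 ∧ s2.pz = 3 ∧ s1.pz = 0 ∧ s2.px = s1.px ∧ s2.py = s1.py)) := by
        rcases ez1 with e1 | e1 <;> rcases ez2 with e2 | e2 <;> omega
      rcases sub.2.2 with h | h
      · exact Or.inl ⟨ho1, ho2, sub.1, sub.2.1, h.1, h.2.1, h.2.2.1, h.2.2.2.1, h.2.2.2.2⟩
      · exact Or.inr (Or.inl ⟨ho2, ho1, sub.1.symm, sub.2.1.symm, h.1, h.2.1, h.2.2.1, h.2.2.2.1, h.2.2.2.2⟩)
    case inl.inr.inl =>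
      have d1 := slab_data0 hLL1 ho1 hsub1
      have d2 := slab_data1 hLL2 ho2 hsub2
      obtain ⟨ex1, ey1, ez1, hb1⟩ := d1
      obtain ⟨ex2, ey2, ez2, hb2⟩ := d2
      simp only [pset, pcells, gpos, ho1, ho2, Set.mem_union, Set.mem_setOf_eq, List.mem_cons,
        List.not_mem_nil, or_false, Prod.mk.injEq, reduceIte] at cvA cvB cvC cvD
      exact (by rcases ez1 with e1 | e1 <;> rcases ey2 with e2 | e2 <;> omega : False).elim
    case inl.inr.inr =>
      have d1 := slab_data0 hLL1 ho1 hsub1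
      have d2 := slab_data2 hLL2 ho2 hsub2
      obtain ⟨ex1, ey1, ez1, hb1⟩ := d1
      obtain ⟨ex2, ey2, ez2, hb2⟩ := d2
      simp only [pset, pcells, gpos, ho1, ho2, Set.mem_union, Set.mem_setOf_eq, List.mem_cons,
        List.not_mem_nil, or_false, Prod.mk.injEq, reduceIte] at cvA cvB cvC cvD
      exact (by rcases ez1 with e1 | e1 <;> rcases ex2 with e2 | e2 <;> omega : False).elim
    case inr.inl.inl =>
      have d1 := slab_data1 hLL1 ho1 hsub1
      have d2 := slab_data0 hLL2 ho2 hsub2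
      obtain ⟨ex1, ey1, ez1, hb1⟩ := d1
      obtain ⟨ex2, ey2, ez2, hb2⟩ := d2
      simp only [pset, pcells, gpos, ho1, ho2, Set.mem_union, Set.mem_setOf_eq, List.mem_cons,
        List.not_mem_nil, or_false, Prod.mk.injEq, reduceIte] at cvA cvB cvC cvD
      exact (by rcases ey1 with e1 | e1 <;> rcases ez2 with e2 | e2 <;> omega : False).elim
    case inr.inl.inr.inl =>
      have d1 := slab_data1 hLL1 ho1 hsub1
      have d2 := slab_data1 hLL2 ho2 hsub2
      obtain ⟨ex1, ey1, ez1, hb1⟩ := d1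
      obtain ⟨ex2, ey2, ez2, hb2⟩ := d2
      simp only [pset, pcells, gpos, ho1, ho2, Set.mem_union, Set.mem_setOf_eq, List.mem_cons,
        List.not_mem_nil, or_false, Prod.mk.injEq, reduceIte] at cvA cvB cvC cvD
      have sub : a1 = a2 ∧ c1 = c2 ∧ ((b2 = b1 + 1 ∧ s1.py = 5 ∧ s2.py = 0 ∧ s1.px = s2.px ∧ s1.pz = s2.pz) ∨
          (b1 = b2 + 1 ∧ s2.py = 5 ∧ s1.py = 0 ∧ s2.px = s1.px ∧ s2.pz = s1.pz)) := by
        rcases ey1 with e1 | e1 <;> rcases ey2 with e2 | e2 <;> omega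
      rcases sub.2.2 with h | h
      · exact Or.inr (Or.inr (Or.inl ⟨ho1, ho2, sub.1, sub.2.1, h.1, h.2.1, h.2.2.1, h.2.2.2.1, h.2.2.2.2⟩))
      · exact Or.inr (Or.inr (Or.inr (Or.inl ⟨ho2, ho1, sub.1.symm, sub.2.1.symm, h.1, h.2.1, h.2.2.1, h.2.2.2.1, h.2.2.2.2⟩)))
    case inr.inl.inr.inr =>
      have d1 := slab_data1 hLL1 ho1 hsub1
      have d2 := slab_data2 hLL2 ho2 hsub2
      obtain ⟨ex1, ey1, ez1, hb1⟩ := d1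
      obtain ⟨ex2, ey2, ez2, hb2⟩ := d2
      simp only [pset, pcells, gpos, ho1, ho2, Set.mem_union, Set.mem_setOf_eq, List.mem_cons,
        List.not_mem_nil, or_false, Prod.mk.injEq, reduceIte] at cvA cvB cvC cvD
      exact (by rcases ey1 with e1 | e1 <;> rcases ex2 with e2 | e2 <;> omega : False).elim
    case inr.inr.inl =>
      have d1 := slab_data2 hLL1 ho1 hsub1
      have d2 := slab_data0 hLL2 ho2 hsub2
      obtain ⟨ex1, ey1, ez1, hb1⟩ := d1
      obtain ⟨ex2, ey2, ez2, hb2⟩ := d2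
      simp only [pset, pcells, gpos, ho1, ho2, Set.mem_union, Set.mem_setOf_eq, List.mem_cons,
        List.not_mem_nil, or_false, Prod.mk.injEq, reduceIte] at cvA cvB cvC cvD
      exact (by rcases ex1 with e1 | e1 <;> rcases ez2 with e2 | e2 <;> omega : False).elim
    case inr.inr.inr.inl =>
      have d1 := slab_data2 hLL1 ho1 hsub1
      have d2 := slab_data1 hLL2 ho2 hsub2
      obtain ⟨ex1, ey1, ez1, hb1⟩ := d1
      obtain ⟨ex2, ey2, ez2, hb2⟩ := d2
      simp only [pset, pcells, gpos, ho1, ho2, Set.mem_union, Set.mem_setOf_eq, List.mem_cons,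
        List.not_mem_nil, or_false, Prod.mk.injEq, reduceIte] at cvA cvB cvC cvD
      exact (by rcases ex1 with e1 | e1 <;> rcases ey2 with e2 | e2 <;> omega : False).elim
    case inr.inr.inr.inr =>
      have d1 := slab_data2 hLL1 ho1 hsub1
      have d2 := slab_data2 hLL2 ho2 hsub2
      obtain ⟨ex1, ey1, ez1, hb1⟩ := d1
      obtain ⟨ex2, ey2, ez2, hb2⟩ := d2
      simp only [pset, pcells, gpos, ho1, ho2, Set.mem_union, Set.mem_setOf_eq, List.mem_cons,
        List.not_mem_nil, or_false, Prod.mk.injEq, reduceIte] at cvA cvB cvC cvD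
      have sub : b1 = b2 ∧ c1 = c2 ∧ ((a2 = a1 + 1 ∧ s1.px = 5 ∧ s2.px = 0 ∧ s1.py = s2.py ∧ s1.pz = s2.pz) ∨
          (a1 = a2 + 1 ∧ s2.px = 5 ∧ s1.px = 0 ∧ s2.py = s1.py ∧ s2.pz = s1.pz)) := by
        rcases ex1 with e1 | e1 <;> rcases ex2 with e2 | e2 <;> omega
      rcases sub.2.2 with h | h
      · exact Or.inr (Or.inr (Or.inr (Or.inr (Or.inl ⟨ho1, ho2, sub.1, sub.2.1, h.1, h.2.1, h.2.2.1, h.2.2.2.1, h.2.2.2.2⟩))))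
      · exact Or.inr (Or.inr (Or.inr (Or.inr (Or.inr ⟨ho2, ho1, sub.1.symm, sub.2.1.symm, h.1, h.2.1, h.2.2.1, h.2.2.2.1, h.2.2.2.2⟩))))
  rcases key with k | k | k | k | k | k
  · exact interface_contra h1 h2 (by omega) (fun hc => hc.1 ⟨k.1, k.2.1, k.2.2.2.2.2.1, k.2.2.2.2.2.2.1, k.2.2.2.2.2.2.2.1, k.2.2.2.2.2.2.2.2⟩)
  · exact interface_contra h2 h1 (by omega) (fun hc => hc.1 ⟨k.1, k.2.1, k.2.2.2.2.2.1, k.2.2.2.2.2.2.1, k.2.2.2.2.2.2.2.1, k.2.2.2.2.2.2.2.2⟩)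
  · exact interface_contra h1 h2 (by omega) (fun hc => hc.2.1 ⟨k.1, k.2.1, k.2.2.2.2.2.1, k.2.2.2.2.2.2.1, k.2.2.2.2.2.2.2.1, k.2.2.2.2.2.2.2.2⟩)
  · exact interface_contra h2 h1 (by omega) (fun hc => hc.2.1 ⟨k.1, k.2.1, k.2.2.2.2.2.1, k.2.2.2.2.2.2.1, k.2.2.2.2.2.2.2.1, k.2.2.2.2.2.2.2.2⟩)
  · exact interface_contra h1 h2 (by omega) (fun hc => hc.2.2 ⟨k.1, k.2.1, k.2.2.2.2.2.1, k.2.2.2.2.2.2.1, k.2.2.2.2.2.2.2.1, k.2.2.2.2.2.2.2.2⟩)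
  · exact interface_contra h2 h1 (by omega) (fun hc => hc.2.2 ⟨k.1, k.2.1, k.2.2.2.2.2.1, k.2.2.2.2.2.2.1, k.2.2.2.2.2.2.2.1, k.2.2.2.2.2.2.2.2⟩)

lemma not_block_pset {g : P3} {s : Proto} (hL : s ∈ LL) : ¬ IsBlock222 (pset g s) := by
  rintro ⟨x, y, z, hB⟩
  have ho : s.o = 0 ∨ s.o = 1 ∨ s.o = 2 := by have := (C0 s hL).1; omega
  have m1 : ((x, y, z) : P3) ∈ pset g s := by rw [hB]; simp
  have m2 : ((x + 1, y + 1, z + 1) : P3) ∈ pset g s := by rw [hB]; simp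
  rcases ho with ho | ho | ho <;>
    simp [pset, pcells, ho, Prod.ext_iff] at m1 m2 <;> omega

lemma same_region {g : P3} {s t : Proto}
    (hL : ∃ L ∈ [LA, LA2, LB, LB2], s ∈ L ∧ t ∈ L) (hne : s ≠ t) :
    ¬ IsBlock222 (pset g s ∪ pset g t) := by
  rintro ⟨x, y, z, hB⟩
  have hB' : pset g s ∪ pset g t = Bset x y z := hB
  obtain ⟨L, hLm, hsL, htL⟩ := hL
  obtain ⟨p, hp, q, hq, hsp⟩ := C1 L hLm s hsL t htL hne
  have hps : ((p.1 + g.1, p.2.1 + g.2.1, p.2.2 + g.2.2) : P3) ∈ pset g s := by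
    simp only [pset, Set.mem_setOf_eq, add_sub_cancel_right]
    simpa using hp
  have hqt : ((q.1 + g.1, q.2.1 + g.2.1, q.2.2 + g.2.2) : P3) ∈ pset g t := by
    simp only [pset, Set.mem_setOf_eq, add_sub_cancel_right]
    simpa using hq
  have b1 := memB (hB' ▸ Set.mem_union_left _ hps)
  have b2 := memB (hB' ▸ Set.mem_union_right _ hqt)
  simp only [Prod.fst, Prod.snd] at b1 b2
  omega

lemma rigid (n i : ℕ) : ∀ P1 ∈ tiling n i, ∀ P2 ∈ tiling n i, ¬ IsBlock222 (P1 ∪ P2) := by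
  rintro P1 ⟨a, b, c, ha, hb, hc, s, hs, rfl⟩ P2 ⟨a', b', c', ha', hb', hc', s', hs', rfl⟩
  by_cases hpos : a = a' ∧ b = b' ∧ c = c'
  · obtain ⟨rfl, rfl, rfl⟩ := hpos
    by_cases hse : s = s'
    · subst hse
      rw [Set.union_self]
      exact not_block_pset (listAt_mem_LL hs)
    · have hLex : ∃ L ∈ [LA, LA2, LB, LB2], s ∈ L ∧ s' ∈ L := by
        unfold listAt at hs hs'
        split_ifs at hs hs' <;> simp_all
      exact same_region hLex hse
  · exact cross_region hs hs' hpos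

lemma decode (n i : ℕ) (hn : 0 < n) (hi : i < 2 * n ^ 2) :
    ∃ a b c, a < n ∧ b < n ∧ c < 2 * n ∧ posIdx n a b c = i := by
  have hnn : 0 < n * n := Nat.mul_pos hn hn
  refine ⟨(i % (n * n)) % n, (i % (n * n)) / n, i / (n * n), Nat.mod_lt _ hn, ?_, ?_, ?_⟩
  · exact Nat.div_lt_of_lt_mul (Nat.mod_lt _ hnn)
  · have h2 : i / (n * n) < 2 := by
      apply Nat.div_lt_of_lt_mul
      calc i < 2 * n ^ 2 := hi
        _ = n * n * 2 := by ring
    omega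
  · unfold posIdx
    have e1 : i % (n * n) % n + n * (i % (n * n) / n) = i % (n * n) := Nat.mod_add_div _ _
    have e2 : i % (n * n) + n * n * (i / (n * n)) = i := Nat.mod_add_div _ _
    omega

lemma shift_mem {g : P3} {s : Proto} {p : P3} (hp : p ∈ pcells s) :
    ((p.1 + g.1, p.2.1 + g.2.1, p.2.2 + g.2.2) : P3) ∈ pset g s := by
  simp only [pset, Set.mem_setOf_eq, add_sub_cancel_right]
  simpa using hp

lemma tiling_ne {n i j : ℕ} (hn : 0 < n) (hij : i < j) (hj : j ≤ 2 * n ^ 2) :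
    tiling n j ≠ tiling n i := by
  intro hEq
  obtain ⟨a, b, c, ha, hb, hc, hidx⟩ := decode n i hn (lt_of_lt_of_le hij hj)
  set w := if (a + b + c) % 2 = 0 then wA else wB with hw
  have hwin : w ∈ listAt n j a b c := by
    unfold listAt
    rw [hidx]
    split_ifs with h1 h2 h3 <;> simp only [hw, h1, if_pos, if_neg, reduceIte] <;>
      first
        | exact C5.1
        | exact C5.2.1
        | omega
  have hmem : pset (gpos a b c) w ∈ tiling n j := ⟨a, b, c, ha, hb, hc, w, hwin, rfl⟩
  rw [hEq] at hmem
  obtain ⟨a', b', c', ha', hb', hc', s', hs', heq⟩ := hmem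
  have hq0 : ((w.px, w.py, w.pz) : P3) ∈ pcells w := by
    unfold pcells; split_ifs <;> simp
  have hgq0 : ((w.px + (gpos a b c).1, w.py + (gpos a b c).2.1, w.pz + (gpos a b c).2.2) : P3)
      ∈ pset (gpos a b c) w := shift_mem hq0
  have bnd1 := cell_bounds hwin hgq0
  have bnd2 := cell_bounds hs' (heq ▸ hgq0)
  have hpos : a = a' ∧ b = b' ∧ c = c' := by
    simp only [gpos] at bnd1 bnd2
    omega
  obtain ⟨rfl, rfl, rfl⟩ := hpos
  have hs'i : s' ∈ (if (a + b + c) % 2 = 0 then LA else LB) := by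
    have := hs'
    unfold listAt at this
    rw [hidx] at this
    split_ifs at this <;> simp_all
  have hcells : ∀ p ∈ pcells w, p ∈ pcells s' := by
    intro p hp
    have h1 := shift_mem (g := gpos a b c) hp
    rw [heq] at h1
    simp only [pset, Set.mem_setOf_eq, add_sub_cancel_right] at h1
    simpa using h1
  by_cases hpar : (a + b + c) % 2 = 0
  · rw [if_pos hpar] at hs'i
    have hwA : w = wA := by rw [hw, if_pos hpar]
    obtain ⟨p0, hp0, hnp0⟩ := C5.2.2.1 s' hs'i
    exact hnp0 (hcells p0 (by rw [hwA]; exact hp0))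
  · rw [if_neg hpar] at hs'i
    have hwB : w = wB := by rw [hw, if_neg hpar]
    obtain ⟨p0, hp0, hnp0⟩ := C5.2.2.2 s' hs'i
    exact hnp0 (hcells p0 (by rw [hwB]; exact hp0))

lemma no_flip_from (n i : ℕ) (t : Set (Set P3)) : ¬ Flip (tiling n i) t := by
  rintro ⟨P1, P2, P1', P2', h1, h2, -, -, -, -, hblk⟩
  exact rigid n i P1 h1 P2 h2 hblk

theorem box_6n6n8n_many_components (n : ℕ) (hn : 0 < n) :
    ∃ f : Fin (2 * n ^ 2 + 1) → Set (Set (ℤ × ℤ × ℤ)),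
      (∀ i, IsSlabTiling (Box (6 * (n : ℤ)) (6 * (n : ℤ)) (8 * (n : ℤ))) (f i)) ∧
      (∀ i j, i ≠ j → ¬ Relation.ReflTransGen Flip (f i) (f j)) := by
  refine ⟨fun i => tiling n i.val, fun i => tiling_isSlabTiling n i.val, ?_⟩
  intro i j hij hreach
  rcases Relation.ReflTransGen.cases_head hreach with heq | ⟨c, hstep, -⟩
  · have hvne : i.val ≠ j.val := fun h => hij (Fin.ext h)
    rcases Nat.lt_or_ge i.val j.val with h | h
    · exact tiling_ne hn h (by omega) heq.symm
    · have h' : j.val < i.val := by omega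
      exact tiling_ne hn h' (by omega) heq
  · exact no_flip_from n i.val c hstep
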